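/- For every natural number n ≥ 1, the integral from 0 to ∞ of (ln x)/(1+x^2)^{n+1} dx equals -(π/2^{2n+1})·C(2n, n)·∑_{k=1}^{n} 1/(2k-1), where C(2n, n) is the central binomial coefficient. -/

import Mathlib

open Real Finset MeasureTheory Set Filter

noncomputable def ff (n : ℕ) (x : ℝ) : ℝ := Real.log x / (1 + x ^ 2) ^ (n + 1)
noncomputable def gg (n : ℕ) (x : ℝ) : ℝ := 1 / (1 + x ^ 2) ^ (n + 1)

lemma log_le_two_sqrt {x : ℝ} (hx : 1 ≤ x) : Real.log x ≤ 2 * x ^ ((1:ℝ)/2) := by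
  have h0 : (0:ℝ) < x := lt_of_lt_of_le one_pos hx
  have h1 : Real.log (x ^ ((1:ℝ)/2)) ≤ x ^ ((1:ℝ)/2) - 1 :=
    Real.log_le_sub_one_of_pos (Real.rpow_pos_of_pos h0 _)
  rw [Real.log_rpow h0] at h1
  nlinarith [Real.rpow_pos_of_pos h0 ((1:ℝ)/2)]

lemma abs_log_integrable :
    IntegrableOn (fun x : ℝ => |Real.log x| / (1 + x ^ 2)) (Ioi 0) := by
  rw [← Set.Ioc_union_Ioi_eq_Ioi (zero_le_one (α := ℝ))]
  apply IntegrableOn.union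
  · -- on Ioc 0 1
    have hdom : IntegrableOn (fun x : ℝ => 2 * x ^ (-(1:ℝ)/2)) (Ioc (0:ℝ) 1) := by
      have := (intervalIntegral.intervalIntegrable_rpow' (a := 0) (b := 1)
        (by norm_num : (-1:ℝ) < -1/2)).const_mul 2
      rwa [intervalIntegrable_iff_integrableOn_Ioc_of_le zero_le_one] at this
    apply hdom.mono' ?_ ?_
    · exact ((Real.measurable_log.abs.div
        ((measurable_id.pow_const 2).const_add 1)).aestronglyMeasurable)
    · filter_upwards [ae_restrict_mem measurableSet_Ioc] with x hx
      have hx0 : 0 < x := hx.1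
      have hx1 : x ≤ 1 := hx.2
      have hd : (0:ℝ) < 1 + x ^ 2 := by positivity
      have hlog : |Real.log x| = Real.log x⁻¹ := by
        rw [Real.log_inv, abs_of_nonpos (Real.log_nonpos hx0.le hx1)]
      have hb : Real.log x⁻¹ ≤ 2 * (x⁻¹) ^ ((1:ℝ)/2) :=
        log_le_two_sqrt (one_le_inv_iff₀.2 ⟨hx0, hx1⟩)
      have hinv : (x⁻¹) ^ ((1:ℝ)/2) = x ^ (-(1:ℝ)/2) := by
        rw [Real.inv_rpow hx0.le, ← Real.rpow_neg hx0.le]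
        norm_num
      rw [Real.norm_eq_abs, abs_of_nonneg (div_nonneg (abs_nonneg _) hd.le)]
      calc |Real.log x| / (1 + x ^ 2) ≤ |Real.log x| / 1 :=
            div_le_div₀ (abs_nonneg _) le_rfl one_pos (by nlinarith)
        _ = Real.log x⁻¹ := by rw [div_one, hlog]
        _ ≤ 2 * x ^ (-(1:ℝ)/2) := by rw [← hinv]; exact hb
  · -- on Ioi 1
    have hdom : IntegrableOn (fun x : ℝ => 2 * x ^ (-(3:ℝ)/2)) (Ioi (1:ℝ)) :=
      (integrableOn_Ioi_rpow_of_lt (by norm_num) one_pos).const_mul 2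
    apply hdom.mono' ?_ ?_
    · exact ((Real.measurable_log.abs.div
        ((measurable_id.pow_const 2).const_add 1)).aestronglyMeasurable)
    · filter_upwards [ae_restrict_mem measurableSet_Ioi] with x hx
      have hx1 : (1:ℝ) ≤ x := le_of_lt hx
      have hx0 : (0:ℝ) < x := lt_of_lt_of_le one_pos hx1
      have hd : (0:ℝ) < 1 + x ^ 2 := by positivity
      rw [Real.norm_eq_abs, abs_of_nonneg (div_nonneg (abs_nonneg _) hd.le)]
      have h1 : |Real.log x| = Real.log x := abs_of_nonneg (Real.log_nonneg hx1)
      have h2 : (x:ℝ) ^ (2:ℕ) ≤ 1 + x ^ 2 := by nlinarith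
      calc |Real.log x| / (1 + x ^ 2) ≤ (2 * x ^ ((1:ℝ)/2)) / x ^ (2:ℕ) := by
            rw [h1]
            exact div_le_div₀ (by positivity) (log_le_two_sqrt hx1) (by positivity) h2
      _ = 2 * x ^ (-(3:ℝ)/2) := by
            rw [← Real.rpow_natCast x 2, mul_div_assoc, ← Real.rpow_sub hx0]
            norm_num

lemma int_gg (n : ℕ) : IntegrableOn (gg n) (Ioi (0:ℝ)) := by
  apply (integrable_inv_one_add_sq.integrableOn (s := Ioi 0)).mono'
  · exact (Continuous.aestronglyMeasurable (by
      apply Continuous.div continuous_const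
      · continuity
      · intro x; positivity))
  · filter_upwards [ae_restrict_mem measurableSet_Ioi] with x _
    have hd : (0:ℝ) < 1 + x^2 := by positivity
    simp only [gg, Real.norm_eq_abs]
    rw [abs_of_nonneg (by positivity), one_div]
    apply inv_anti₀ hd
    exact le_self_pow₀ (by nlinarith) (Nat.succ_ne_zero n)

lemma int_ff (n : ℕ) : IntegrableOn (ff n) (Ioi (0:ℝ)) := by
  apply abs_log_integrable.mono'
  · exact (Real.measurable_log.div
      (((measurable_id.pow_const 2).const_add 1).pow_const (n+1))).aestronglyMeasurable
  · filter_upwards [ae_restrict_mem measurableSet_Ioi] with x _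
    have hd : (0:ℝ) < 1 + x^2 := by positivity
    simp only [ff, Real.norm_eq_abs, abs_div]
    rw [abs_of_nonneg (by positivity : (0:ℝ) ≤ (1+x^2)^(n+1))]
    exact div_le_div₀ (abs_nonneg _) le_rfl hd
      (le_self_pow₀ (by nlinarith) (Nat.succ_ne_zero n))


lemma hasDerivAt_G (n : ℕ) {x : ℝ} (hx : 0 < x) :
    HasDerivAt (fun y => y * Real.log y / (1 + y ^ 2) ^ (n + 1))
      (gg n x - (2*n+1) * ff n x + (2*n+2) * ff (n+1) x) x := by
  have hx0 : x ≠ 0 := hx.ne'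
  have hd : (0:ℝ) < 1 + x^2 := by positivity
  have hu : HasDerivAt (fun y : ℝ => y * Real.log y) (Real.log x + 1) x := by
    have := (hasDerivAt_id x).mul (Real.hasDerivAt_log hx0)
    exact this.congr_deriv (by simp [mul_inv_cancel₀ hx0])
  have hv : HasDerivAt (fun y : ℝ => (1 + y ^ 2) ^ (n + 1))
      ((n+1 : ℝ) * (1 + x^2)^n * (2*x)) x := by
    have h1 : HasDerivAt (fun y : ℝ => 1 + y ^ 2) (2*x) x := by
      simpa using (hasDerivAt_pow 2 x).const_add 1
    exact (h1.pow (n+1)).congr_deriv (by simp)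
  have h := hu.div hv (by positivity)
  refine h.congr_deriv ?_
  simp only [ff, gg]
  have hne : (1 + x^2) ≠ 0 := hd.ne'
  field_simp
  ring

lemma hasDerivAt_H (n : ℕ) (x : ℝ) :
    HasDerivAt (fun y => y / (1 + y ^ 2) ^ (n + 1))
      (-(2*n+1) * gg n x + (2*n+2) * gg (n+1) x) x := by
  have hd : (0:ℝ) < 1 + x^2 := by positivity
  have hv : HasDerivAt (fun y : ℝ => (1 + y ^ 2) ^ (n + 1))
      ((n+1 : ℝ) * (1 + x^2)^n * (2*x)) x := by
    have h1 : HasDerivAt (fun y : ℝ => 1 + y ^ 2) (2*x) x := by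
      simpa using (hasDerivAt_pow 2 x).const_add 1
    exact (h1.pow (n+1)).congr_deriv (by simp)
  have h := (hasDerivAt_id x).div hv (by positivity)
  refine h.congr_deriv ?_
  simp only [gg, id]
  have hne : (1 + x^2) ≠ 0 := hd.ne'
  field_simp
  ring

lemma tendsto_G (n : ℕ) :
    Tendsto (fun x : ℝ => x * Real.log x / (1 + x ^ 2) ^ (n + 1)) atTop (nhds 0) := by
  have h0 : Tendsto (fun x : ℝ => Real.log x / x) atTop (nhds 0) :=
    Real.isLittleO_log_id_atTop.tendsto_div_nhds_zero
  apply squeeze_zero' ?_ ?_ h0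
  · filter_upwards [eventually_ge_atTop (1:ℝ)] with x hx
    have : 0 ≤ Real.log x := Real.log_nonneg hx
    positivity
  · filter_upwards [eventually_ge_atTop (1:ℝ)] with x hx
    have hx0 : (0:ℝ) < x := lt_of_lt_of_le one_pos hx
    have hl : 0 ≤ Real.log x := Real.log_nonneg hx
    have h2 : (x:ℝ) ^ 2 ≤ (1 + x ^ 2) ^ (n + 1) := by
      calc (x:ℝ)^2 ≤ 1 + x^2 := by nlinarith
      _ ≤ (1+x^2)^(n+1) := le_self_pow₀ (by nlinarith) (Nat.succ_ne_zero n)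
    calc x * Real.log x / (1 + x ^ 2) ^ (n + 1) ≤ x * Real.log x / x ^ 2 :=
          div_le_div_of_nonneg_left (by positivity) (by positivity) h2
    _ = Real.log x / x := by field_simp [hx0.ne']
lemma tendsto_H (n : ℕ) :
    Tendsto (fun x : ℝ => x / (1 + x ^ 2) ^ (n + 1)) atTop (nhds 0) := by
  apply squeeze_zero' ?_ ?_ tendsto_inv_atTop_zero
  · filter_upwards [eventually_ge_atTop (1:ℝ)] with x hx
    have hx0 : (0:ℝ) < x := lt_of_lt_of_le one_pos hx
    positivity
  · filter_upwards [eventually_ge_atTop (1:ℝ)] with x hx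
    have hx0 : (0:ℝ) < x := lt_of_lt_of_le one_pos hx
    have h2 : (x:ℝ) ^ 2 ≤ (1 + x ^ 2) ^ (n + 1) := by
      calc (x:ℝ)^2 ≤ 1 + x^2 := by nlinarith
      _ ≤ (1+x^2)^(n+1) := le_self_pow₀ (by nlinarith) (Nat.succ_ne_zero n)
    calc x / (1 + x ^ 2) ^ (n + 1) ≤ x / x ^ 2 :=
          div_le_div_of_nonneg_left (by positivity) (by positivity) h2
    _ = x⁻¹ := by field_simp [hx0.ne']

lemma recI (n : ℕ) :
    (2*(n:ℝ)+2) * (∫ x in Ioi (0:ℝ), ff (n+1) x) =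
      (2*(n:ℝ)+1) * (∫ x in Ioi (0:ℝ), ff n x) - ∫ x in Ioi (0:ℝ), gg n x := by
  have hcont : ContinuousWithinAt (fun y : ℝ => y * Real.log y / (1 + y ^ 2) ^ (n + 1))
      (Ici 0) 0 := by
    apply Continuous.continuousWithinAt
    exact Real.continuous_mul_log.div (by continuity) (fun x => by positivity)
  have hint : IntegrableOn
      (fun x => gg n x - (2*(n:ℝ)+1) * ff n x + (2*(n:ℝ)+2) * ff (n+1) x) (Ioi (0:ℝ)) :=
    ((int_gg n).sub ((int_ff n).const_mul _)).add ((int_ff (n+1)).const_mul _)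
  have key := integral_Ioi_of_hasDerivAt_of_tendsto hcont
    (fun x hx => hasDerivAt_G n hx) hint (tendsto_G n)
  simp only [Real.log_zero, mul_zero, zero_mul, zero_div, sub_zero] at key
  have ha : Integrable (fun x : ℝ => gg n x - (2*(n:ℝ)+1) * ff n x)
      (volume.restrict (Ioi 0)) := (int_gg n).sub ((int_ff n).const_mul _)
  have hb : Integrable (fun x : ℝ => (2*(n:ℝ)+2) * ff (n+1) x)
      (volume.restrict (Ioi 0)) := (int_ff (n+1)).const_mul _
  have hc : Integrable (fun x : ℝ => (2*(n:ℝ)+1) * ff n x)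
      (volume.restrict (Ioi 0)) := (int_ff n).const_mul _
  rw [MeasureTheory.integral_add ha hb,
    MeasureTheory.integral_sub (int_gg n) hc,
    MeasureTheory.integral_const_mul, MeasureTheory.integral_const_mul] at key
  linarith

lemma recJ (n : ℕ) :
    (2*(n:ℝ)+2) * (∫ x in Ioi (0:ℝ), gg (n+1) x) =
      (2*(n:ℝ)+1) * (∫ x in Ioi (0:ℝ), gg n x) := by
  have hcont : ContinuousWithinAt (fun y : ℝ => y / (1 + y ^ 2) ^ (n + 1)) (Ici 0) 0 := by
    apply Continuous.continuousWithinAt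
    exact continuous_id.div (by continuity) (fun x => by positivity)
  have hint : IntegrableOn
      (fun x => -(2*(n:ℝ)+1) * gg n x + (2*(n:ℝ)+2) * gg (n+1) x) (Ioi (0:ℝ)) :=
    ((int_gg n).const_mul _).add ((int_gg (n+1)).const_mul _)
  have key := integral_Ioi_of_hasDerivAt_of_tendsto hcont
    (fun x _ => hasDerivAt_H n x) hint (tendsto_H n)
  simp only [zero_div, sub_zero] at key
  have ha : Integrable (fun x : ℝ => -(2*(n:ℝ)+1) * gg n x)
      (volume.restrict (Ioi 0)) := (int_gg n).const_mul _
  have hb : Integrable (fun x : ℝ => (2*(n:ℝ)+2) * gg (n+1) x)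
      (volume.restrict (Ioi 0)) := (int_gg (n+1)).const_mul _
  rw [MeasureTheory.integral_add ha hb,
    MeasureTheory.integral_const_mul, MeasureTheory.integral_const_mul] at key
  linarith

lemma J0 : ∫ x in Ioi (0:ℝ), gg 0 x = π / 2 := by
  have h : ∫ x in Ioi (0:ℝ), gg 0 x = ∫ x in Ioi (0:ℝ), (1 + x ^ 2)⁻¹ := by
    apply setIntegral_congr_fun measurableSet_Ioi
    intro x _; simp [gg]
  rw [h, integral_Ioi_inv_one_add_sq, Real.arctan_zero, sub_zero]

lemma I0 : ∫ x in Ioi (0:ℝ), ff 0 x = 0 := by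
  have himg : Real.exp '' Set.univ = Ioi (0:ℝ) := by
    rw [Set.image_univ, Real.range_exp]
  have hch := integral_image_eq_integral_abs_deriv_smul (s := Set.univ)
    (f := Real.exp) (f' := Real.exp) MeasurableSet.univ
    (fun x _ => (Real.hasDerivAt_exp x).hasDerivWithinAt) Real.exp_injective.injOn (ff 0)
  rw [himg, Measure.restrict_univ] at hch
  rw [hch]
  set φ := fun t : ℝ => |Real.exp t| • ff 0 (Real.exp t) with hφ
  have hodd : ∀ t : ℝ, φ (-t) = - φ t := by
    intro t
    simp only [hφ, ff, smul_eq_mul, abs_of_pos (Real.exp_pos _), Real.log_exp, pow_one,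
      Real.exp_neg]
    have he : Real.exp t ≠ 0 := (Real.exp_pos t).ne'
    field_simp
    linear_combination t*(1+Real.exp t^2)*(Real.exp t*(Real.exp t)⁻¹+1) * mul_inv_cancel₀ he
  have h1 : ∫ t : ℝ, φ (-t) = ∫ t : ℝ, φ t := integral_neg_eq_self φ volume
  have h2 : ∫ t : ℝ, φ (-t) = - ∫ t : ℝ, φ t := by
    simp_rw [hodd]; exact integral_neg φ
  linarith

lemma Jclosed (n : ℕ) :
    ∫ x in Ioi (0:ℝ), gg n x = π / 2 ^ (2*n+1) * (Nat.choose (2*n) n : ℝ) := by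
  induction n with
  | zero => simpa using J0
  | succ n ih =>
    have h2 : (2*(n:ℝ)+2) ≠ 0 := by positivity
    have hcb : ((n:ℝ)+1) * (Nat.choose (2*(n+1)) (n+1) : ℝ) =
        2*(2*(n:ℝ)+1) * (Nat.choose (2*n) n : ℝ) := by
      have := Nat.succ_mul_centralBinom_succ n
      have h' : (n+1) * Nat.choose (2*(n+1)) (n+1) = 2 * (2*n+1) * Nat.choose (2*n) n := this
      exact_mod_cast h'
    apply mul_left_cancel₀ h2
    rw [recJ n, ih]
    have hp : (2:ℝ) ^ (2*(n+1)+1) = 4 * 2 ^ (2*n+1) := by ring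
    rw [hp]
    field_simp
    linear_combination (-2) * hcb

lemma Iclosed (n : ℕ) :
    ∫ x in Ioi (0:ℝ), ff n x =
      -(π / 2 ^ (2 * n + 1)) * (Nat.choose (2 * n) n : ℝ) *
        ∑ k ∈ Finset.Icc 1 n, 1 / (2 * (k : ℝ) - 1) := by
  induction n with
  | zero => simpa using I0
  | succ n ih =>
    have h2 : (2*(n:ℝ)+2) ≠ 0 := by positivity
    have hcb : ((n:ℝ)+1) * (Nat.choose (2*(n+1)) (n+1) : ℝ) =
        2*(2*(n:ℝ)+1) * (Nat.choose (2*n) n : ℝ) := by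
      have h' : (n+1) * Nat.choose (2*(n+1)) (n+1) = 2 * (2*n+1) * Nat.choose (2*n) n :=
        Nat.succ_mul_centralBinom_succ n
      exact_mod_cast h'
    apply mul_left_cancel₀ h2
    rw [recI n, ih, Jclosed n]
    rw [Finset.sum_Icc_succ_top (Nat.le_add_left 1 n)]
    push_cast
    have hp : (2:ℝ) ^ (2*(n+1)+1) = 4 * 2 ^ (2*n+1) := by ring
    rw [hp]
    have h21 : (2*((n:ℝ)+1)-1) = 2*(n:ℝ)+1 := by ring
    rw [h21]
    have h3 : (2*(n:ℝ)+1) ≠ 0 := by positivity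
    field_simp
    linear_combination (2 *
      ((2*(n:ℝ)+1)*(∑ k ∈ Finset.Icc 1 n, 1/(2*(k:ℝ)-1))+1)) * hcb

/-- For `n ≥ 1`,
`∫_0^∞ ln x / (1+x²)^(n+1) dx = -(π/2^{2n+1}) C(2n,n) ∑_{k=1}^n 1/(2k-1)`. -/
theorem integral_log_div_one_add_sq_pow (n : ℕ) (hn : 1 ≤ n) :
    ∫ x in Set.Ioi (0:ℝ), Real.log x / (1 + x ^ 2) ^ (n + 1) =
      -(Real.pi / 2 ^ (2 * n + 1)) * (Nat.choose (2 * n) n : ℝ) *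
        ∑ k ∈ Finset.Icc 1 n, 1 / (2 * (k : ℝ) - 1) :=
  Iclosed n
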